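/- Let ω ∈ ℝ satisfy cos(πω) ≠ 0, let λ ∈ ℝ and let n ≥ 1 be an integer. Then there exist real numbers α̃_0, α̃_2, …, α̃_{2n} such that P̃_n(λ') = ∑_{k=0}^{n} α̃_{2k} (λ')^{2k} for all λ' ∈ ℝ, and α̃_2 = |1 − exp(2πi·(ω + 1/2)·n)|² / (2·cos²(πω)); in particular α̃_2 ≤ 2/cos²(πω), a bound independent of n. -/

import Mathlib

open MeasureTheory Real
open scoped Matrix

/-- The Almost-Mathieu potential `ṽ_j(θ) = 2 cos(2π(jω + θ))`. -/
noncomputable def vAM (ω : ℝ) (j : ℕ) (θ : ℝ) : ℝ :=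
  2 * Real.cos (2 * Real.pi * ((j : ℝ) * ω + θ))

/-- The zero-energy Almost-Mathieu transfer matrix `Ã_j(θ)`. -/
noncomputable def AAM (ω lam : ℝ) (j : ℕ) (θ : ℝ) : Matrix (Fin 2) (Fin 2) ℝ :=
  !![-(lam * vAM ω j θ), -1; 1, 0]

/-- The products `M̃_n(θ) = Ã_n(θ) ⋯ Ã_1(θ)`. -/
noncomputable def MAM (ω lam : ℝ) : ℕ → ℝ → Matrix (Fin 2) (Fin 2) ℝ
  | 0, _ => 1
  | n + 1, θ => AAM ω lam (n + 1) θ * MAM ω lam n θ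

/-- `P̃_n(λ) = ∫₀¹ Tr(M̃_n(θ)ᵀ M̃_n(θ)) dθ`. -/
noncomputable def PAM (ω : ℝ) (n : ℕ) (lam : ℝ) : ℝ :=
  ∫ θ in (0:ℝ)..1, Matrix.trace ((MAM ω lam n θ)ᵀ * MAM ω lam n θ)

open intervalIntegral

noncomputable def Jm : Matrix (Fin 2) (Fin 2) ℝ := !![0,-1;1,0]
noncomputable def Em : Matrix (Fin 2) (Fin 2) ℝ := !![1,0;0,0]

noncomputable def dM (ω : ℝ) : ℕ → ℕ → ℝ → Matrix (Fin 2) (Fin 2) ℝ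
  | 0, 0, _ => 1
  | 0, _+1, _ => 0
  | n+1, 0, θ => Jm * dM ω n 0 θ
  | n+1, m+1, θ => Jm * dM ω n (m+1) θ + (-(vAM ω (n+1) θ)) • (Em * dM ω n m θ)

lemma AAM_eq (ω lam : ℝ) (j : ℕ) (θ : ℝ) :
    AAM ω lam j θ = Jm + (lam * -(vAM ω j θ)) • Em := by
  ext i k; fin_cases i <;> fin_cases k <;> simp [AAM, Jm, Em] <;> ring

lemma dM_eq_zero (ω : ℝ) (n m : ℕ) (h : n < m) (θ : ℝ) : dM ω n m θ = 0 := by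
  induction n generalizing m with
  | zero => obtain ⟨m, rfl⟩ : ∃ k, m = k + 1 := ⟨m - 1, by omega⟩; rfl
  | succ n ih =>
    obtain ⟨m, rfl⟩ : ∃ k, m = k + 1 := ⟨m - 1, by omega⟩
    show Jm * dM ω n (m+1) θ + _ • (Em * dM ω n m θ) = 0
    rw [ih _ (by omega), ih _ (by omega)]; simp

lemma MAM_expand (ω lam : ℝ) (n : ℕ) (θ : ℝ) :
    MAM ω lam n θ = ∑ m ∈ Finset.range (n+1), lam ^ m • dM ω n m θ := by
  induction n with
  | zero => simp [MAM, dM]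
  | succ n ih =>
    show AAM ω lam (n+1) θ * MAM ω lam n θ = _
    rw [ih, AAM_eq, add_mul, Finset.mul_sum, Matrix.smul_mul, Finset.mul_sum, Finset.smul_sum]
    have h1 : ∀ m ∈ Finset.range (n+1), Jm * lam ^ m • dM ω n m θ
        = lam ^ m • (Jm * dM ω n m θ) := fun m _ => (Matrix.mul_smul _ _ _)
    have h2 : (∑ m ∈ Finset.range (n+1), (lam * -vAM ω (n+1) θ) • (Em * lam ^ m • dM ω n m θ))
        = ∑ m ∈ Finset.range (n+1), lam ^ (m+1) • ((-vAM ω (n+1) θ) • (Em * dM ω n m θ)) := by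
      refine Finset.sum_congr rfl fun m _ => ?_
      rw [Matrix.mul_smul, smul_smul, smul_smul]
      congr 1; ring
    rw [Finset.sum_congr rfl h1, h2]
    rw [Finset.sum_range_succ' (fun m => lam ^ m • dM ω (n+1) m θ)]
    have hd0 : dM ω (n+1) 0 θ = Jm * dM ω n 0 θ := rfl
    have hds : ∀ m, dM ω (n+1) (m+1) θ
        = Jm * dM ω n (m+1) θ + (-(vAM ω (n+1) θ)) • (Em * dM ω n m θ) := fun m => rfl
    simp only [hds, hd0, smul_add, Finset.sum_add_distrib]
    rw [Finset.sum_range_succ' (fun m => lam ^ m • (Jm * dM ω n m θ))]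
    rw [Finset.sum_range_succ (fun m => lam ^ (m+1) • (Jm * dM ω n (m+1) θ))]
    rw [dM_eq_zero ω n (n+1) (by omega)]
    simp only [pow_zero, smul_zero, mul_zero, add_zero, smul_zero]
    abel

lemma dM_zero (ω : ℝ) (n : ℕ) (θ : ℝ) : dM ω n 0 θ = Jm ^ n := by
  induction n with
  | zero => rfl
  | succ n ih => show Jm * dM ω n 0 θ = _; rw [ih, ← pow_succ']

lemma dM_one (ω : ℝ) (n : ℕ) (θ : ℝ) :
    dM ω n 1 θ = ∑ j ∈ Finset.range n, (-(vAM ω (j+1) θ)) • (Jm ^ (n-1-j) * Em * Jm ^ j) := by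
  induction n with
  | zero => simp; rfl
  | succ n ih =>
    show Jm * dM ω n 1 θ + (-(vAM ω (n+1) θ)) • (Em * dM ω n 0 θ) = _
    rw [ih, dM_zero, Finset.mul_sum, Finset.sum_range_succ]
    congr 1
    · refine Finset.sum_congr rfl fun j hj => ?_
      rw [Matrix.mul_smul]
      congr 1
      simp only [Finset.mem_range] at hj
      rw [show n+1-1-j = (n-1-j)+1 by omega, pow_succ']
      simp only [mul_assoc]
    · simp [show n+1-1-n = 0 by omega, Matrix.smul_mul]

lemma dM_two (ω : ℝ) (n : ℕ) (θ : ℝ) :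
    dM ω n 2 θ = ∑ k ∈ Finset.range n, ∑ j ∈ Finset.range k,
      (vAM ω (j+1) θ * vAM ω (k+1) θ) • (Jm ^ (n-1-k) * Em * Jm ^ (k-1-j) * Em * Jm ^ j) := by
  induction n with
  | zero => simp; rfl
  | succ n ih =>
    show Jm * dM ω n 2 θ + (-(vAM ω (n+1) θ)) • (Em * dM ω n 1 θ) = _
    rw [ih, dM_one, Finset.mul_sum, Finset.sum_range_succ]
    congr 1
    · refine Finset.sum_congr rfl fun k hk => ?_
      rw [Finset.mul_sum]
      refine Finset.sum_congr rfl fun j hj => ?_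
      rw [Matrix.mul_smul]
      congr 1
      simp only [Finset.mem_range] at hk
      rw [show n+1-1-k = (n-1-k)+1 by omega, pow_succ']
      simp only [mul_assoc]
    · rw [Finset.mul_sum, Finset.smul_sum]
      refine Finset.sum_congr rfl fun j hj => ?_
      rw [Matrix.mul_smul, smul_smul]
      rw [show n + 1 - 1 - n = 0 by omega, pow_zero, one_mul]
      simp only [mul_assoc]
      congr 1
      ring

lemma continuous_vAM (ω : ℝ) (j : ℕ) : Continuous (vAM ω j) := by
  unfold vAM; fun_prop

lemma continuous_dM (ω : ℝ) (n m : ℕ) : Continuous (fun θ => dM ω n m θ) := by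
  induction n generalizing m with
  | zero => match m with
    | 0 => exact continuous_const
    | m+1 => exact continuous_const
  | succ n ih => match m with
    | 0 => exact (continuous_const.matrix_mul (ih 0))
    | m+1 =>
      exact ((continuous_const.matrix_mul (ih (m+1)))).add
        (((continuous_vAM ω (n+1)).neg).smul (continuous_const.matrix_mul (ih m)))

noncomputable def Rot (t : ℝ) : Matrix (Fin 2) (Fin 2) ℝ := !![Real.cos t, -Real.sin t; Real.sin t, Real.cos t]

lemma Jpow (a : ℕ) : Jm ^ a = Rot ((a:ℝ) * (Real.pi/2)) := by
  induction a with
  | zero => simp [Rot, Matrix.one_fin_two]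
  | succ n ih =>
    rw [pow_succ, ih]
    have h : ((n:ℝ)+1) * (Real.pi/2) = (n:ℝ) * (Real.pi/2) + Real.pi/2 := by ring
    simp only [Rot, Jm, Nat.cast_succ, h, Real.cos_add, Real.sin_add, Real.cos_pi_div_two, Real.sin_pi_div_two]
    ext i j
    fin_cases i <;> fin_cases j <;> simp [Matrix.mul_apply, Fin.sum_univ_two] <;> ring

lemma tr_master1 (x y z w : ℝ) :
    Matrix.trace ((Rot x * Em * Rot y)ᵀ * (Rot z * Em * Rot w)) =
      Real.cos (x - z) * Real.cos (y - w) := by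
  simp only [Rot, Em, Matrix.trace, Matrix.diag, Matrix.mul_apply, Matrix.transpose_apply, Fin.sum_univ_two]
  simp [Matrix.cons_val_zero, Matrix.cons_val_one, Real.cos_sub]
  ring

lemma tr_master2 (u x y : ℝ) :
    Matrix.trace ((Rot u)ᵀ * (Rot x * Em * Rot y)) = Real.cos (x + y - u) := by
  simp only [Rot, Em, Matrix.trace, Matrix.diag, Matrix.mul_apply, Matrix.transpose_apply, Fin.sum_univ_two]
  simp [Real.cos_sub, Real.cos_add, Real.sin_add]
  ring

lemma int_cos_lin (c : ℝ) : ∫ θ in (0:ℝ)..1, Real.cos (4*Real.pi*θ + c) = 0 := by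
  have h4 : (4*Real.pi) ≠ 0 := by positivity
  have := intervalIntegral.integral_comp_mul_add Real.cos h4 c (a := 0) (b := 1)
  rw [this]
  simp only [integral_cos, mul_zero, zero_add, mul_one]
  rw [show 4*Real.pi + c = (c + 2*Real.pi) + 2*Real.pi by ring, Real.sin_add_two_pi,
    Real.sin_add_two_pi]
  simp

lemma vv_int (ω : ℝ) (a b : ℕ) :
    ∫ θ in (0:ℝ)..1, vAM ω a θ * vAM ω b θ
      = 2 * Real.cos (2*Real.pi*(((a:ℝ) - b)*ω)) := by
  have key : ∀ θ : ℝ, vAM ω a θ * vAM ω b θ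
      = 2 * Real.cos (2*Real.pi*(((a:ℝ) - b)*ω))
        + 2 * Real.cos (4*Real.pi*θ + 2*Real.pi*(((a:ℝ) + b)*ω)) := by
    intro θ
    unfold vAM
    rw [show 2*Real.pi*(((a:ℝ) - b)*ω) = 2 * Real.pi * ((a:ℝ) * ω + θ) - 2 * Real.pi * ((b:ℝ) * ω + θ) by ring]
    rw [show 4*Real.pi*θ + 2*Real.pi*(((a:ℝ) + b)*ω) = 2 * Real.pi * ((a:ℝ) * ω + θ) + 2 * Real.pi * ((b:ℝ) * ω + θ) by ring]
    rw [Real.cos_sub, Real.cos_add]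
    ring
  simp only [key]
  rw [intervalIntegral.integral_add (intervalIntegrable_const)
    (Continuous.intervalIntegrable (by fun_prop) _ _)]
  simp [int_cos_lin, intervalIntegral.integral_const]
  rw [show 4 * π + 2 * π * (((a:ℝ) + b) * ω) = 2 * π * (((a:ℝ) + b) * ω) + 2 * π + 2 * π by ring,
    Real.sin_add_two_pi, Real.sin_add_two_pi, sub_self]

lemma EAE (A : Matrix (Fin 2) (Fin 2) ℝ) : Em * A * Em = (A 0 0) • Em := by
  ext i j; fin_cases i <;> fin_cases j <;>
    simp [Em, Matrix.mul_apply, Matrix.vecMul, dotProduct, Matrix.vecHead, Fin.sum_univ_two]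

lemma J00 (d : ℕ) : (Jm ^ d) 0 0 = Real.cos ((d:ℝ) * (Real.pi/2)) := by
  rw [Jpow]; rfl

lemma T1val (n j j' : ℕ) (hj : j < n) (hj' : j' < n) :
    Matrix.trace ((Jm^(n-1-j) * Em * Jm^j)ᵀ * (Jm^(n-1-j') * Em * Jm^j')) =
      Real.cos (((j':ℝ)-j)*(Real.pi/2)) * Real.cos (((j:ℝ)-j')*(Real.pi/2)) := by
  rw [Jpow, Jpow, Jpow, Jpow, tr_master1]
  congr 1
  · rw [Nat.cast_sub (by omega), Nat.cast_sub (by omega), Nat.cast_sub (by omega),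
      Nat.cast_sub (by omega)]
    push_cast; ring_nf
  · ring_nf

lemma T2val (n j k : ℕ) (hk : k < n) (hj : j < k) :
    Matrix.trace ((Jm^n)ᵀ * (Jm^(n-1-k) * Em * Jm^(k-1-j) * Em * Jm^j)) =
      Real.cos (((k:ℝ)-1-j)*(Real.pi/2)) * Real.cos (((j:ℝ)-1-k)*(Real.pi/2)) := by
  have h1 : Jm^(n-1-k) * Em * Jm^(k-1-j) * Em * Jm^j
      = ((Jm^(k-1-j)) 0 0) • (Jm^(n-1-k) * Em * Jm^j) := by
    rw [show Jm^(n-1-k) * Em * Jm^(k-1-j) * Em * Jm^j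
        = Jm^(n-1-k) * (Em * Jm^(k-1-j) * Em) * Jm^j by simp only [mul_assoc],
      EAE, Matrix.mul_smul, Matrix.smul_mul]
  rw [h1, Matrix.mul_smul, Matrix.trace_smul, J00, Jpow, Jpow, Jpow, tr_master2]
  rw [Nat.cast_sub (by omega), Nat.cast_sub (by omega), Nat.cast_sub (by omega),
    Nat.cast_sub (by omega)]
  push_cast
  rw [smul_eq_mul]
  congr 2
  ring

lemma tr_t_symm (A B : Matrix (Fin 2) (Fin 2) ℝ) :
    Matrix.trace (Aᵀ * B) = Matrix.trace (Bᵀ * A) := by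
  rw [← Matrix.trace_transpose (Aᵀ * B), Matrix.transpose_mul, Matrix.transpose_transpose]

lemma beta11 (ω : ℝ) (n : ℕ) :
    (∫ θ in (0:ℝ)..1, Matrix.trace ((dM ω n 1 θ)ᵀ * dM ω n 1 θ))
      = ∑ j ∈ Finset.range n, ∑ j' ∈ Finset.range n,
        2 * Real.cos (2*Real.pi*(((j:ℝ) - j')*ω)) *
          (Real.cos (((j':ℝ)-j)*(Real.pi/2)) * Real.cos (((j:ℝ)-j')*(Real.pi/2))) := by
  have hpt : ∀ θ : ℝ, Matrix.trace ((dM ω n 1 θ)ᵀ * dM ω n 1 θ)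
      = ∑ j ∈ Finset.range n, ∑ j' ∈ Finset.range n,
        (vAM ω (j+1) θ * vAM ω (j'+1) θ) *
          Matrix.trace ((Jm^(n-1-j) * Em * Jm^j)ᵀ * (Jm^(n-1-j') * Em * Jm^j')) := by
    intro θ
    rw [dM_one, Matrix.transpose_sum, Finset.sum_mul_sum, Matrix.trace_sum]
    refine Finset.sum_congr rfl fun j hj => ?_
    rw [Matrix.trace_sum]
    refine Finset.sum_congr rfl fun j' hj' => ?_
    rw [Matrix.transpose_smul, Matrix.smul_mul, Matrix.mul_smul, smul_smul,
      Matrix.trace_smul, neg_mul_neg, smul_eq_mul]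
  simp only [hpt]
  rw [intervalIntegral.integral_finset_sum]
  · refine Finset.sum_congr rfl fun j hj => ?_
    rw [intervalIntegral.integral_finset_sum]
    · refine Finset.sum_congr rfl fun j' hj' => ?_
      rw [intervalIntegral.integral_mul_const, vv_int]
      simp only [Finset.mem_range] at hj hj'
      rw [T1val n j j' hj hj']
      push_cast
      ring_nf
    · intro j' _
      exact ((((continuous_vAM ω (j+1)).mul (continuous_vAM ω (j'+1))).mul
        continuous_const)).intervalIntegrable _ _
  · intro j _
    refine (Continuous.intervalIntegrable ?_ _ _)
    exact continuous_finset_sum _ fun j' _ =>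
      (((continuous_vAM ω (j+1)).mul (continuous_vAM ω (j'+1))).mul continuous_const)

lemma beta02 (ω : ℝ) (n : ℕ) :
    (∫ θ in (0:ℝ)..1, Matrix.trace ((dM ω n 0 θ)ᵀ * dM ω n 2 θ))
      = ∑ k ∈ Finset.range n, ∑ j ∈ Finset.range k,
        2 * Real.cos (2*Real.pi*(((j:ℝ) - k)*ω)) *
          (Real.cos (((k:ℝ)-1-j)*(Real.pi/2)) * Real.cos (((j:ℝ)-1-k)*(Real.pi/2))) := by
  have hpt : ∀ θ : ℝ, Matrix.trace ((dM ω n 0 θ)ᵀ * dM ω n 2 θ)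
      = ∑ k ∈ Finset.range n, ∑ j ∈ Finset.range k,
        (vAM ω (j+1) θ * vAM ω (k+1) θ) *
          Matrix.trace ((Jm^n)ᵀ * (Jm^(n-1-k) * Em * Jm^(k-1-j) * Em * Jm^j)) := by
    intro θ
    rw [dM_two, dM_zero, Finset.mul_sum, Matrix.trace_sum]
    refine Finset.sum_congr rfl fun k hk => ?_
    rw [Finset.mul_sum, Matrix.trace_sum]
    refine Finset.sum_congr rfl fun j hj => ?_
    rw [Matrix.mul_smul, Matrix.trace_smul, smul_eq_mul]
  simp only [hpt]
  rw [intervalIntegral.integral_finset_sum]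
  · refine Finset.sum_congr rfl fun k hk => ?_
    rw [intervalIntegral.integral_finset_sum]
    · refine Finset.sum_congr rfl fun j hj => ?_
      rw [intervalIntegral.integral_mul_const, vv_int]
      simp only [Finset.mem_range] at hk hj
      rw [T2val n j k hk hj]
      push_cast
      ring_nf
    · intro j _
      exact ((((continuous_vAM ω (j+1)).mul (continuous_vAM ω (k+1))).mul
        continuous_const)).intervalIntegrable _ _
  · intro k _
    refine (Continuous.intervalIntegrable ?_ _ _)
    exact continuous_finset_sum _ fun j _ =>
      (((continuous_vAM ω (j+1)).mul (continuous_vAM ω (k+1))).mul continuous_const)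

noncomputable def betaf (ω : ℝ) (n m m' : ℕ) : ℝ :=
  ∫ θ in (0:ℝ)..1, Matrix.trace ((dM ω n m θ)ᵀ * dM ω n m' θ)

lemma cont_tr_dd (ω : ℝ) (n m m' : ℕ) :
    Continuous (fun θ => Matrix.trace ((dM ω n m θ)ᵀ * dM ω n m' θ)) :=
  Continuous.matrix_trace ((Continuous.matrix_transpose (continuous_dM ω n m)).matrix_mul
    (continuous_dM ω n m'))

lemma PAM_expand (ω : ℝ) (n : ℕ) (lam : ℝ) :
    PAM ω n lam = ∑ m ∈ Finset.range (n+1), ∑ m' ∈ Finset.range (n+1),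
      betaf ω n m m' * lam^(m+m') := by
  unfold PAM
  have hpt : ∀ θ : ℝ, Matrix.trace ((MAM ω lam n θ)ᵀ * MAM ω lam n θ)
      = ∑ m ∈ Finset.range (n+1), ∑ m' ∈ Finset.range (n+1),
        lam^(m+m') * Matrix.trace ((dM ω n m θ)ᵀ * dM ω n m' θ) := by
    intro θ
    rw [MAM_expand, Matrix.transpose_sum, Finset.sum_mul_sum, Matrix.trace_sum]
    refine Finset.sum_congr rfl fun m hm => ?_
    rw [Matrix.trace_sum]
    refine Finset.sum_congr rfl fun m' hm' => ?_
    rw [Matrix.transpose_smul, Matrix.smul_mul, Matrix.mul_smul, smul_smul,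
      Matrix.trace_smul, smul_eq_mul, pow_add]
  simp only [hpt]
  rw [intervalIntegral.integral_finset_sum]
  · refine Finset.sum_congr rfl fun m hm => ?_
    rw [intervalIntegral.integral_finset_sum]
    · refine Finset.sum_congr rfl fun m' hm' => ?_
      rw [intervalIntegral.integral_const_mul, betaf]
      ring
    · exact fun m' _ => (continuous_const.mul (cont_tr_dd ω n m m')).intervalIntegrable _ _
  · exact fun m _ => (Continuous.intervalIntegrable (continuous_finset_sum _
      fun m' _ => continuous_const.mul (cont_tr_dd ω n m m')) _ _)

lemma vAM_shift (ω : ℝ) (j : ℕ) (θ : ℝ) : vAM ω j (θ + 1/2) = - vAM ω j θ := by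
  unfold vAM
  rw [show 2 * Real.pi * ((j:ℝ) * ω + (θ + 1/2)) = 2 * Real.pi * ((j:ℝ) * ω + θ) + Real.pi by ring,
    Real.cos_add_pi]
  ring

lemma vAM_per (ω : ℝ) (j : ℕ) (θ : ℝ) : vAM ω j (θ + 1) = vAM ω j θ := by
  unfold vAM
  rw [show 2 * Real.pi * ((j:ℝ) * ω + (θ + 1)) = 2 * Real.pi * ((j:ℝ) * ω + θ) + 2*Real.pi by ring,
    Real.cos_add_two_pi]

lemma MAM_neg (ω lam : ℝ) (n : ℕ) (θ : ℝ) :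
    MAM ω (-lam) n θ = MAM ω lam n (θ + 1/2) := by
  induction n with
  | zero => rfl
  | succ n ih =>
    show AAM ω (-lam) (n+1) θ * MAM ω (-lam) n θ = AAM ω lam (n+1) (θ+1/2) * MAM ω lam n (θ+1/2)
    rw [ih]
    congr 1
    unfold AAM
    rw [vAM_shift]
    norm_num

lemma MAM_per (ω lam : ℝ) (n : ℕ) (θ : ℝ) :
    MAM ω lam n (θ + 1) = MAM ω lam n θ := by
  induction n with
  | zero => rfl
  | succ n ih =>
    show AAM ω lam (n+1) (θ+1) * MAM ω lam n (θ+1) = AAM ω lam (n+1) θ * MAM ω lam n θ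
    rw [ih]
    congr 1
    unfold AAM
    rw [vAM_per]

lemma continuous_MAM (ω lam : ℝ) (n : ℕ) : Continuous (fun θ => MAM ω lam n θ) := by
  induction n with
  | zero => exact continuous_const
  | succ n ih =>
    have hA : Continuous (fun θ => AAM ω lam (n+1) θ) := by
      refine continuous_matrix fun i j => ?_
      fin_cases i <;> fin_cases j <;> simp [AAM]
      · exact (continuous_const.mul (continuous_vAM ω (n+1))).neg
      · exact continuous_const
      · exact continuous_const
      · exact continuous_const
    exact hA.matrix_mul ih

lemma PAM_even (ω lam : ℝ) (n : ℕ) : PAM ω n (-lam) = PAM ω n lam := by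
  unfold PAM
  have hpt : ∀ θ : ℝ, Matrix.trace ((MAM ω (-lam) n θ)ᵀ * MAM ω (-lam) n θ)
      = Matrix.trace ((MAM ω lam n (θ + 1/2))ᵀ * MAM ω lam n (θ + 1/2)) := by
    intro θ; rw [MAM_neg]
  simp only [hpt]
  set g : ℝ → ℝ := fun θ => Matrix.trace ((MAM ω lam n θ)ᵀ * MAM ω lam n θ) with hg
  have hper : Function.Periodic g 1 := fun θ => by simp only [hg]; rw [MAM_per]
  have := intervalIntegral.integral_comp_add_right (a := (0:ℝ)) (b := 1) g (1/2)
  rw [this]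
  have h2 := hper.intervalIntegral_add_eq (1/2 : ℝ) (0 : ℝ)
  norm_num at h2 ⊢
  exact h2

open Polynomial in
lemma coeff_comp_negX (p : Polynomial ℝ) (k : ℕ) :
    (p.comp (-X)).coeff k = (-1)^k * p.coeff k := by
  induction p using Polynomial.induction_on' with
  | add p q hp hq => simp [add_comp, coeff_add, hp, hq]; ring
  | monomial i a =>
    rw [monomial_comp]
    rw [show ((-X : ℝ[X]))^i = C ((-1)^i) * X^i by
      rw [neg_pow]; simp [map_pow]]
    rw [← mul_assoc, ← map_mul, coeff_C_mul, coeff_X_pow, coeff_monomial]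
    by_cases h : i = k
    · simp [h]; ring
    · simp [h, Ne.symm h]

lemma betaf_zero (ω : ℝ) (n m m' : ℕ) (h : n < m ∨ n < m') : betaf ω n m m' = 0 := by
  unfold betaf
  have : ∀ θ : ℝ, Matrix.trace ((dM ω n m θ)ᵀ * dM ω n m' θ) = 0 := by
    intro θ
    rcases h with h | h
    · rw [dM_eq_zero ω n m h]; simp
    · rw [dM_eq_zero ω n m' h]; simp
  simp only [this, intervalIntegral.integral_zero]

lemma sum_sum_ite2 (N : ℕ) (hN : 2 ≤ N) (b : ℕ → ℕ → ℝ) :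
    (∑ m ∈ Finset.range (N+1), ∑ m' ∈ Finset.range (N+1),
      (if m+m'=2 then b m m' else 0)) = b 0 2 + b 1 1 + b 2 0 := by
  induction N with
  | zero => omega
  | succ N ih =>
    rcases Nat.lt_or_ge N 2 with hN2 | hN2
    · interval_cases N
      · omega
      · simp [Finset.sum_range_succ]
    · rw [Finset.sum_range_succ]
      have h1 : (∑ m' ∈ Finset.range (N+1+1), (if (N+1)+m'=2 then b (N+1) m' else 0)) = 0 :=
        Finset.sum_eq_zero fun m' _ => by rw [if_neg (by omega)]
      rw [h1, add_zero]
      have h2 : ∀ m ∈ Finset.range (N+1),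
          (∑ m' ∈ Finset.range (N+1+1), (if m+m'=2 then b m m' else 0))
          = ∑ m' ∈ Finset.range (N+1), (if m+m'=2 then b m m' else 0) := by
        intro m hm
        rw [Finset.sum_range_succ, if_neg (by simp at hm; omega), add_zero]
      rw [Finset.sum_congr rfl h2, ih hN2]

lemma filter_even_range (n : ℕ) :
    Finset.filter (fun s => Even s) (Finset.range (2*n+1))
      = Finset.image (fun k => 2*k) (Finset.range (n+1)) := by
  ext s
  simp only [Finset.mem_filter, Finset.mem_range, Finset.mem_image]
  constructor
  · rintro ⟨hs, k, hk⟩; exact ⟨k, by omega, by omega⟩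
  · rintro ⟨k, hk, rfl⟩; exact ⟨by omega, ⟨k, by omega⟩⟩

open Polynomial in
lemma PAM_poly_rep (ω : ℝ) (n : ℕ) :
    ∃ α : ℕ → ℝ,
      (∀ lam : ℝ, PAM ω n lam = ∑ k ∈ Finset.range (n+1), α k * lam^(2*k)) ∧
      α 1 = betaf ω n 0 2 + betaf ω n 1 1 + betaf ω n 2 0 := by
  set p : ℝ[X] := ∑ m ∈ Finset.range (n+1), ∑ m' ∈ Finset.range (n+1),
      C (betaf ω n m m') * X^(m+m') with hp
  have heval : ∀ lam : ℝ, p.eval lam = PAM ω n lam := by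
    intro lam
    rw [PAM_expand, hp, eval_finset_sum]
    refine Finset.sum_congr rfl fun m _ => ?_
    rw [eval_finset_sum]
    refine Finset.sum_congr rfl fun m' _ => ?_
    simp
  have hdeg : p.natDegree < 2*n+1 := by
    have : p.natDegree ≤ 2*n := by
      apply natDegree_sum_le_of_forall_le
      intro m hm
      apply natDegree_sum_le_of_forall_le
      intro m' hm'
      refine le_trans (natDegree_C_mul_le _ _) ?_
      rw [natDegree_X_pow]
      simp only [Finset.mem_range] at hm hm'
      omega
    omega
  have hodd : ∀ s : ℕ, ¬ Even s → p.coeff s = 0 := by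
    intro s hs
    have hfun : p.comp (-X) = p := by
      apply Polynomial.funext
      intro lam
      rw [eval_comp]
      simp only [eval_neg, eval_X]
      rw [heval, heval, PAM_even]
    have h1 := coeff_comp_negX p s
    rw [hfun] at h1
    have h2 : ((-1:ℝ))^s = -1 := Odd.neg_one_pow (Nat.not_even_iff_odd.mp hs)
    rw [h2] at h1
    linarith
  refine ⟨fun k => p.coeff (2*k), ?_, ?_⟩
  · intro lam
    rw [← heval, Polynomial.eval_eq_sum_range' hdeg]
    rw [← Finset.sum_filter_add_sum_filter_not (Finset.range (2*n+1)) (fun s => Even s)]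
    have hzero : (∑ s ∈ Finset.filter (fun s => ¬ Even s) (Finset.range (2*n+1)),
        p.coeff s * lam^s) = 0 := by
      refine Finset.sum_eq_zero fun s hs => ?_
      simp only [Finset.mem_filter] at hs
      rw [hodd s hs.2, zero_mul]
    rw [hzero, add_zero, filter_even_range,
      Finset.sum_image (fun x _ y _ h => by omega)]
  · show p.coeff 2 = _
    rw [hp, finset_sum_coeff]
    have hterm : ∀ m m' : ℕ, (C (betaf ω n m m') * X^(m+m')).coeff 2
        = if m + m' = 2 then betaf ω n m m' else 0 := by
      intro m m'
      rw [coeff_C_mul, coeff_X_pow]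
      by_cases h : m + m' = 2
      · simp [h]
      · simp [h, Ne.symm h]
    have hcol : ∀ m : ℕ, (∑ m' ∈ Finset.range (n+1), C (betaf ω n m m') * X^(m+m')).coeff 2
        = ∑ m' ∈ Finset.range (n+3), (if m + m' = 2 then betaf ω n m m' else 0) := by
      intro m
      rw [finset_sum_coeff]
      rw [Finset.sum_congr rfl (fun m' _ => hterm m m')]
      refine Finset.sum_subset (Finset.range_subset_range.mpr (by omega)) ?_
      intro m' _ hm'
      simp only [Finset.mem_range, not_lt] at hm'
      split
      · exact betaf_zero ω n m m' (Or.inr (by omega))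
      · rfl
    rw [Finset.sum_congr rfl (fun m _ => hcol m)]
    have houter : (∑ m ∈ Finset.range (n+1), ∑ m' ∈ Finset.range (n+3),
        (if m + m' = 2 then betaf ω n m m' else 0))
        = ∑ m ∈ Finset.range (n+3), ∑ m' ∈ Finset.range (n+3),
          (if m + m' = 2 then betaf ω n m m' else 0) := by
      refine Finset.sum_subset (Finset.range_subset_range.mpr (by omega)) ?_
      intro m _ hm
      simp only [Finset.mem_range, not_lt] at hm
      refine Finset.sum_eq_zero fun m' _ => ?_
      split
      · exact betaf_zero ω n m m' (Or.inl (by omega))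
      · rfl
    rw [houter]
    exact sum_sum_ite2 (n+2) (by omega) (betaf ω n)

lemma sq_sum_ident (A B F : ℕ → ℕ → ℝ)
    (h1 : ∀ x y : ℕ, A x y + A y x + 2 * B x y = F x y + F y x)
    (h2 : ∀ x : ℕ, A x x = F x x) (n : ℕ) :
    (∑ j ∈ Finset.range n, ∑ j' ∈ Finset.range n, A j j')
      + 2 * (∑ k ∈ Finset.range n, ∑ j ∈ Finset.range k, B j k)
      = ∑ j ∈ Finset.range n, ∑ j' ∈ Finset.range n, F j j' := by
  induction n with
  | zero => simp
  | succ n ih =>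
    simp only [Finset.sum_range_succ, Finset.sum_add_distrib]
    have hsum : (∑ j ∈ Finset.range n, (A j n + A n j + 2 * B j n))
        = ∑ j ∈ Finset.range n, (F j n + F n j) :=
      Finset.sum_congr rfl fun j _ => h1 j n
    simp only [Finset.sum_add_distrib] at hsum
    rw [← Finset.mul_sum] at hsum
    linarith [ih, hsum, h2 n]

lemma ptwise_trig (ω x y : ℝ) :
    (2*Real.cos (2*Real.pi*((x-y)*ω)) * (Real.cos ((y-x)*(Real.pi/2)) * Real.cos ((x-y)*(Real.pi/2))))
    + (2*Real.cos (2*Real.pi*((y-x)*ω)) * (Real.cos ((x-y)*(Real.pi/2)) * Real.cos ((y-x)*(Real.pi/2))))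
    + 2 * (2*Real.cos (2*Real.pi*((x-y)*ω)) * (Real.cos ((y-1-x)*(Real.pi/2)) * Real.cos ((x-1-y)*(Real.pi/2))))
    = 2*Real.cos ((x-y)*Real.pi)*Real.cos (2*Real.pi*((x-y)*ω))
      + 2*Real.cos ((y-x)*Real.pi)*Real.cos (2*Real.pi*((y-x)*ω)) := by
  have e1 : Real.cos ((y-x)*(Real.pi/2)) = Real.cos ((x-y)*(Real.pi/2)) := by
    rw [show (y-x)*(Real.pi/2) = -((x-y)*(Real.pi/2)) by ring, Real.cos_neg]
  have e2 : Real.cos (2*Real.pi*((y-x)*ω)) = Real.cos (2*Real.pi*((x-y)*ω)) := by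
    rw [show 2*Real.pi*((y-x)*ω) = -(2*Real.pi*((x-y)*ω)) by ring, Real.cos_neg]
  have e3 : Real.cos ((x-1-y)*(Real.pi/2)) = Real.sin ((x-y)*(Real.pi/2)) := by
    rw [show (x-1-y)*(Real.pi/2) = (x-y)*(Real.pi/2) - Real.pi/2 by ring,
      Real.cos_sub_pi_div_two]
  have e4 : Real.cos ((y-1-x)*(Real.pi/2)) = - Real.sin ((x-y)*(Real.pi/2)) := by
    rw [show (y-1-x)*(Real.pi/2) = -((x-y)*(Real.pi/2) + Real.pi/2) by ring, Real.cos_neg,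
      Real.cos_add_pi_div_two]
  have e5 : Real.cos ((y-x)*Real.pi) = Real.cos ((x-y)*Real.pi) := by
    rw [show (y-x)*Real.pi = -((x-y)*Real.pi) by ring, Real.cos_neg]
  have e6 : Real.cos ((x-y)*Real.pi) = 2 * Real.cos ((x-y)*(Real.pi/2))^2 - 1 := by
    rw [show (x-y)*Real.pi = 2*((x-y)*(Real.pi/2)) by ring, Real.cos_two_mul]
  rw [e1, e2, e3, e4, e5, e6]
  linear_combination (-4*Real.cos (2*Real.pi*((x-y)*ω))) * Real.sin_sq_add_cos_sq ((x-y)*(Real.pi/2))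

lemma ptwise_diag (ω : ℝ) (x : ℝ) :
    2*Real.cos (2*Real.pi*((x-x)*ω)) * (Real.cos ((x-x)*(Real.pi/2)) * Real.cos ((x-x)*(Real.pi/2)))
      = 2*Real.cos ((x-x)*Real.pi)*Real.cos (2*Real.pi*((x-x)*ω)) := by
  simp [sub_self]

noncomputable def zeta (ω : ℝ) : ℂ := Complex.exp ((2*Real.pi*ω + Real.pi : ℝ) * Complex.I)

lemma zeta_pow (ω : ℝ) (j : ℕ) :
    zeta ω ^ j = Complex.exp ((((j:ℝ)*(2*Real.pi*ω + Real.pi) : ℝ)) * Complex.I) := by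
  rw [zeta, ← Complex.exp_nat_mul]
  congr 1
  push_cast
  ring

lemma term_re (ω : ℝ) (j j' : ℕ) :
    (zeta ω ^ j * (starRingEnd ℂ) (zeta ω ^ j')).re
      = Real.cos (((j:ℝ)-j')*Real.pi) * Real.cos (2*Real.pi*(((j:ℝ)-j')*ω)) := by
  rw [zeta_pow, zeta_pow, ← Complex.exp_conj]
  rw [show (starRingEnd ℂ) ((((j':ℝ)*(2*Real.pi*ω + Real.pi) : ℝ)) * Complex.I)
      = ((-((j':ℝ)*(2*Real.pi*ω + Real.pi)) : ℝ)) * Complex.I by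
    rw [map_mul, Complex.conj_ofReal, Complex.conj_I]; push_cast; ring]
  rw [← Complex.exp_add]
  rw [show ((((j:ℝ)*(2*Real.pi*ω + Real.pi) : ℝ)) * Complex.I
      + ((-((j':ℝ)*(2*Real.pi*ω + Real.pi)) : ℝ)) * Complex.I)
      = (((((j:ℝ)-j')*(2*Real.pi*ω + Real.pi)) : ℝ)) * Complex.I by push_cast; ring]
  rw [Complex.exp_ofReal_mul_I_re]
  rw [show (((j:ℝ)-j')*(2*Real.pi*ω + Real.pi)) = 2*Real.pi*(((j:ℝ)-j')*ω) + ((j:ℝ)-j')*Real.pi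
    by ring]
  rw [Real.cos_add]
  rw [show ((j:ℝ)-j')*Real.pi = (((j:ℤ)-(j':ℤ) : ℤ) : ℝ)*Real.pi by push_cast; ring]
  rw [Real.sin_int_mul_pi, mul_zero, sub_zero]
  push_cast
  ring

lemma F_sum_eq (ω : ℝ) (n : ℕ) :
    (∑ j ∈ Finset.range n, ∑ j' ∈ Finset.range n,
      2*Real.cos (((j:ℝ)-j')*Real.pi)*Real.cos (2*Real.pi*(((j:ℝ)-j')*ω)))
    = 2 * Complex.normSq (∑ j ∈ Finset.range n, zeta ω ^ j) := by
  have h1 : ∀ j j' : ℕ, 2*Real.cos (((j:ℝ)-j')*Real.pi)*Real.cos (2*Real.pi*(((j:ℝ)-j')*ω))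
      = 2 * (zeta ω ^ j * (starRingEnd ℂ) (zeta ω ^ j')).re := by
    intro j j'; rw [term_re]; ring
  simp only [h1]
  rw [show (∑ j ∈ Finset.range n, ∑ j' ∈ Finset.range n,
      2 * (zeta ω ^ j * (starRingEnd ℂ) (zeta ω ^ j')).re)
    = 2 * ∑ j ∈ Finset.range n, ∑ j' ∈ Finset.range n,
      (zeta ω ^ j * (starRingEnd ℂ) (zeta ω ^ j')).re by
    rw [Finset.mul_sum]
    exact Finset.sum_congr rfl fun j _ => (Finset.mul_sum _ _ _).symm]
  congr 1
  have h2 : ∀ j ∈ Finset.range n, (∑ j' ∈ Finset.range n,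
      (zeta ω ^ j * (starRingEnd ℂ) (zeta ω ^ j')).re)
      = (zeta ω ^ j * (starRingEnd ℂ) (∑ j' ∈ Finset.range n, zeta ω ^ j')).re := by
    intro j _
    rw [map_sum, Finset.mul_sum, Complex.re_sum]
  rw [Finset.sum_congr rfl h2, ← Complex.re_sum, ← Finset.sum_mul, Complex.mul_conj,
    Complex.ofReal_re]

lemma normSq_one_sub_zeta (ω : ℝ) :
    Complex.normSq (1 - zeta ω) = 4 * Real.cos (Real.pi*ω)^2 := by
  have h0 : Real.cos (2*Real.pi*ω + Real.pi) = -(2*Real.cos (Real.pi*ω)^2 - 1) := by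
    rw [Real.cos_add_pi, show 2*Real.pi*ω = 2*(Real.pi*ω) by ring, Real.cos_two_mul]
  rw [zeta, Complex.normSq_apply, Complex.sub_re, Complex.sub_im, Complex.one_re, Complex.one_im,
    Complex.exp_ofReal_mul_I_re, Complex.exp_ofReal_mul_I_im]
  nlinarith [Real.sin_sq_add_cos_sq (2*Real.pi*ω + Real.pi), h0]

lemma geo_val (ω : ℝ) (hω : Real.cos (Real.pi * ω) ≠ 0) (n : ℕ) :
    2 * Complex.normSq (∑ j ∈ Finset.range n, zeta ω ^ j)
      = ‖(1:ℂ) - Complex.exp (2*(Real.pi:ℂ)*Complex.I*((ω:ℂ)+1/2)*(n:ℂ))‖^2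
        / (2*Real.cos (Real.pi*ω)^2) := by
  have hc2 : Real.cos (Real.pi*ω)^2 > 0 := by positivity
  have hzne : zeta ω ≠ 1 := by
    intro h
    have := normSq_one_sub_zeta ω
    rw [h] at this
    simp at this
    nlinarith
  have hzn : zeta ω ^ n = Complex.exp (2*(Real.pi:ℂ)*Complex.I*((ω:ℂ)+1/2)*(n:ℂ)) := by
    rw [zeta_pow]
    congr 1
    push_cast
    ring
  rw [geom_sum_eq hzne, map_div₀ Complex.normSq]
  have h3 : Complex.normSq (zeta ω ^ n - 1)
      = ‖(1:ℂ) - Complex.exp (2*(Real.pi:ℂ)*Complex.I*((ω:ℂ)+1/2)*(n:ℂ))‖^2 := by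
    rw [show zeta ω ^ n - 1 = -((1:ℂ) - Complex.exp (2*(Real.pi:ℂ)*Complex.I*((ω:ℂ)+1/2)*(n:ℂ)))
      by rw [← hzn]; ring]
    rw [Complex.normSq_neg, Complex.normSq_eq_norm_sq]
  have h4 : Complex.normSq (zeta ω - 1) = 4 * Real.cos (Real.pi*ω)^2 := by
    rw [show zeta ω - 1 = -(1 - zeta ω) by ring, Complex.normSq_neg, normSq_one_sub_zeta]
  rw [h3, h4]
  field_simp
  ring


/-- For the Almost-Mathieu model, `P̃_n` is an even polynomial in `λ` whose
`λ²`-coefficient equals `|1 - e[(ω + 1/2)n]|² / (2cos²(πω)) ≤ 2/cos²(πω)`,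
a bound independent of `n`. -/
theorem stmt_17 (ω : ℝ) (hω : Real.cos (Real.pi * ω) ≠ 0) (n : ℕ) (hn : 1 ≤ n) :
    ∃ α : ℕ → ℝ,
      (∀ lam' : ℝ, PAM ω n lam' = ∑ k ∈ Finset.range (n + 1), α k * lam' ^ (2 * k)) ∧
      α 1 = ‖(1 : ℂ) - Complex.exp (2 * (Real.pi : ℂ) * Complex.I *
              ((ω : ℂ) + 1 / 2) * (n : ℂ))‖ ^ 2 / (2 * Real.cos (Real.pi * ω) ^ 2) ∧
      α 1 ≤ 2 / Real.cos (Real.pi * ω) ^ 2 := by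
  obtain ⟨α, hα, hα1⟩ := PAM_poly_rep ω n
  have hc2 : (0:ℝ) < Real.cos (Real.pi*ω)^2 := by positivity
  have hb20 : betaf ω n 2 0 = betaf ω n 0 2 := by
    unfold betaf
    exact intervalIntegral.integral_congr (fun θ _ => tr_t_symm _ _)
  have hident := sq_sum_ident
    (fun j j' => 2 * Real.cos (2*Real.pi*(((j:ℝ) - j')*ω)) *
      (Real.cos (((j':ℝ)-j)*(Real.pi/2)) * Real.cos (((j:ℝ)-j')*(Real.pi/2))))
    (fun j k => 2 * Real.cos (2*Real.pi*(((j:ℝ) - k)*ω)) *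
      (Real.cos (((k:ℝ)-1-j)*(Real.pi/2)) * Real.cos (((j:ℝ)-1-k)*(Real.pi/2))))
    (fun j j' => 2*Real.cos (((j:ℝ)-j')*Real.pi)*Real.cos (2*Real.pi*(((j:ℝ)-j')*ω)))
    (fun x y => ptwise_trig ω x y) (fun x => ptwise_diag ω x) n
  have hval : α 1 = ‖(1 : ℂ) - Complex.exp (2 * (Real.pi : ℂ) * Complex.I *
      ((ω : ℂ) + 1 / 2) * (n : ℂ))‖ ^ 2 / (2 * Real.cos (Real.pi * ω) ^ 2) := by
    rw [hα1, hb20, show betaf ω n 0 2 + betaf ω n 1 1 + betaf ω n 0 2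
        = betaf ω n 1 1 + 2 * betaf ω n 0 2 by ring]
    show (∫ θ in (0:ℝ)..1, Matrix.trace ((dM ω n 1 θ)ᵀ * dM ω n 1 θ))
      + 2 * (∫ θ in (0:ℝ)..1, Matrix.trace ((dM ω n 0 θ)ᵀ * dM ω n 2 θ)) = _
    rw [beta11, beta02, hident, F_sum_eq, geo_val ω hω n]
  refine ⟨α, hα, hval, ?_⟩
  rw [hval]
  have h1 : ‖Complex.exp (2 * (Real.pi : ℂ) * Complex.I * ((ω : ℂ) + 1 / 2) * (n : ℂ))‖ = 1 := by
    rw [show (2 * (Real.pi:ℂ) * Complex.I * ((ω:ℂ)+1/2) * (n:ℂ))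
        = ((2*Real.pi*(ω+1/2)*n : ℝ) : ℂ) * Complex.I by push_cast; ring]
    rw [Complex.norm_exp_ofReal_mul_I]
  have h2 : ‖(1 : ℂ) - Complex.exp (2 * (Real.pi : ℂ) * Complex.I *
      ((ω : ℂ) + 1 / 2) * (n : ℂ))‖ ≤ 2 := by
    refine le_trans (norm_sub_le _ _) ?_
    rw [h1, norm_one]
    norm_num
  have h3 : ‖(1 : ℂ) - Complex.exp (2 * (Real.pi : ℂ) * Complex.I *
      ((ω : ℂ) + 1 / 2) * (n : ℂ))‖^2 ≤ 4 := by
    nlinarith [norm_nonneg ((1 : ℂ) - Complex.exp (2 * (Real.pi : ℂ) * Complex.I *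
      ((ω : ℂ) + 1 / 2) * (n : ℂ)))]
  calc ‖(1 : ℂ) - Complex.exp (2 * (Real.pi : ℂ) * Complex.I *
      ((ω : ℂ) + 1 / 2) * (n : ℂ))‖^2 / (2 * Real.cos (Real.pi * ω) ^ 2)
      ≤ 4 / (2 * Real.cos (Real.pi * ω) ^ 2) := by
        exact div_le_div_of_nonneg_right h3 (by positivity)
    _ = 2 / Real.cos (Real.pi * ω) ^ 2 := by ring
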